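/- With five candidates A < B < C < D < E, single-peaked preferences, an odd number N of voters, and Bloc voting with k = 2: if the winning set is {B,D} (each with strictly more approvals than A, C, E), then the number of voters who prefer C to both B and D is strictly less than N/2 (so the winning set {B,D} is locally stable with majority quota). -/

import Mathlib

open Finset

/-- Each voter's preference is a strict total (linear) order on the candidates. -/
def StrictPrefs {m N : ℕ} (P : Fin N → Fin m → Fin m → Prop) : Prop :=
  ∀ v : Fin N, IsStrictTotalOrder (Fin m) (P v)

/-- Single-peakedness w.r.t. the left-right order on `Fin m`: for `i < j < k`,
no voter ranks both `C_i` and `C_k` above `C_j`. -/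
def SinglePeaked {m N : ℕ} (P : Fin N → Fin m → Fin m → Prop) : Prop :=
  ∀ (v : Fin N) (i j k : Fin m), i < j → j < k → ¬ (P v i j ∧ P v k j)

/-- Number of voters preferring `a` to `b`. -/
def prefCount {m N : ℕ} (P : Fin N → Fin m → Fin m → Prop)
    [∀ v a b, Decidable (P v a b)] (a b : Fin m) : ℕ :=
  (univ.filter fun v => P v a b).card

/-- `a` majority-defeats `b`: strictly more than `N/2` voters prefer `a` to `b`. -/
def Defeats {m N : ℕ} (P : Fin N → Fin m → Fin m → Prop)
    [∀ v a b, Decidable (P v a b)] (a b : Fin m) : Prop :=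
  2 * prefCount P a b > N

instance {m N : ℕ} (P : Fin N → Fin m → Fin m → Prop)
    [∀ v a b, Decidable (P v a b)] (a b : Fin m) : Decidable (Defeats P a b) :=
  inferInstanceAs (Decidable (2 * prefCount P a b > N))

/-- Voter `v` approves candidate `a` under Bloc voting with `k` winners:
`a` is among `v`'s top `k` candidates. -/
def Approves {m N : ℕ} (P : Fin N → Fin m → Fin m → Prop)
    [∀ v a b, Decidable (P v a b)] (k : ℕ) (v : Fin N) (a : Fin m) : Prop :=
  (univ.filter fun b => P v b a).card < k

instance {m N : ℕ} (P : Fin N → Fin m → Fin m → Prop)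
    [∀ v a b, Decidable (P v a b)] (k : ℕ) (v : Fin N) (a : Fin m) :
    Decidable (Approves P k v a) :=
  inferInstanceAs (Decidable ((univ.filter fun b => P v b a).card < k))

/-- Bloc score of candidate `a`: the number of voters who approve `a`. -/
def blocScore {m N : ℕ} (P : Fin N → Fin m → Fin m → Prop)
    [∀ v a b, Decidable (P v a b)] (k : ℕ) (a : Fin m) : ℕ :=
  (univ.filter fun v => Approves P k v a).card

/-- `W` is a winning set under Bloc voting with `k` winners (strict vote totals):
`W` has `k` members and each member has strictly more approvals than each non-member. -/
def IsWinningSet {m N : ℕ} (P : Fin N → Fin m → Fin m → Prop)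
    [∀ v a b, Decidable (P v a b)] (k : ℕ) (W : Finset (Fin m)) : Prop :=
  W.card = k ∧ ∀ w ∈ W, ∀ c ∉ W, blocScore P k w > blocScore P k c


section Aux

variable {N : ℕ} (P : Fin N → Fin 5 → Fin 5 → Prop) [∀ v a b, Decidable (P v a b)]

/-- rank of candidate `a` for voter `v`: number of candidates preferred to `a`. -/
def rnk (v : Fin N) (a : Fin 5) : ℕ := (univ.filter fun c => P v c a).card

lemma rnk_le (v : Fin N) (hv : IsStrictTotalOrder (Fin 5) (P v)) (a : Fin 5) :
    rnk P v a ≤ 4 := by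
  have h : (univ.filter fun c => P v c a) ⊆ univ.erase a := by
    intro c hc
    simp only [mem_filter, mem_univ, true_and] at hc
    refine mem_erase.2 ⟨?_, mem_univ c⟩
    rintro rfl
    exact hv.irrefl c hc
  have := Finset.card_le_card h
  have h2 : (univ.erase a).card = 4 := by
    rw [Finset.card_erase_of_mem (mem_univ a)]
    simp
  rw [h2] at this
  exact this

lemma rnk_lt_of (v : Fin N) (hv : IsStrictTotalOrder (Fin 5) (P v)) {a b : Fin 5}
    (h : P v a b) : rnk P v a < rnk P v b := by
  apply Finset.card_lt_card
  constructor
  · intro c hc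
    simp only [mem_filter, mem_univ, true_and] at *
    exact hv.trans _ _ _ hc h
  · intro hsub
    have := hsub (mem_filter.2 ⟨mem_univ a, h⟩)
    simp only [mem_filter] at this
    exact hv.irrefl a this.2

lemma rnk_iff (v : Fin N) (hv : IsStrictTotalOrder (Fin 5) (P v)) (a b : Fin 5) :
    P v a b ↔ rnk P v a < rnk P v b := by
  constructor
  · exact rnk_lt_of P v hv
  · intro h
    rcases (by have := hv.trichotomous a b; tauto : P v a b ∨ a = b ∨ P v b a) with h1 | h1 | h1
    · exact h1
    · subst h1; omega
    · have := rnk_lt_of P v hv h1; omega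

lemma rnk_ne (v : Fin N) (hv : IsStrictTotalOrder (Fin 5) (P v)) {a b : Fin 5}
    (hab : a ≠ b) : rnk P v a ≠ rnk P v b := by
  rcases (by have := hv.trichotomous a b; tauto : P v a b ∨ a = b ∨ P v b a) with h1 | h1 | h1
  · exact Nat.ne_of_lt (rnk_lt_of P v hv h1)
  · exact absurd h1 hab
  · exact (Nat.ne_of_lt (rnk_lt_of P v hv h1)).symm

/-- per-voter combinatorial core -/
lemma voter_core (v : Fin N) (hv : IsStrictTotalOrder (Fin 5) (P v))
    (hsp : ∀ i j k : Fin 5, i < j → j < k → ¬ (P v i j ∧ P v k j)) :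
    ((rnk P v 1 < 2 ↔ ¬ rnk P v 3 < 2) ∧
      (P v 2 1 → P v 2 3 → rnk P v 2 < 2)) := by
  have hR := rnk_iff P v hv
  have hle := rnk_le P v hv
  have d : ∀ a b : Fin 5, a ≠ b → rnk P v a ≠ rnk P v b := fun a b => rnk_ne P v hv
  have s012 := hsp 0 1 2 (by decide) (by decide)
  have s123 := hsp 1 2 3 (by decide) (by decide)
  have s234 := hsp 2 3 4 (by decide) (by decide)
  have s024 := hsp 0 2 4 (by decide) (by decide)
  rw [hR 0 1, hR 2 1] at s012
  rw [hR 1 2, hR 3 2] at s123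
  rw [hR 2 3, hR 4 3] at s234
  rw [hR 0 2, hR 4 2] at s024
  have h21 := hR 2 1
  have h23 := hR 2 3
  have h0 := hle 0; have h1 := hle 1; have h2 := hle 2; have h3 := hle 3; have h4 := hle 4
  have d01 := d 0 1 (by decide); have d02 := d 0 2 (by decide); have d03 := d 0 3 (by decide)
  have d04 := d 0 4 (by decide); have d12 := d 1 2 (by decide); have d13 := d 1 3 (by decide)
  have d14 := d 1 4 (by decide); have d23 := d 2 3 (by decide); have d24 := d 2 4 (by decide)
  have d34 := d 3 4 (by decide)
  constructor
  · omega
  · intro a b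
    rw [h21] at a; rw [h23] at b
    omega

lemma approves_iff_rnk (v : Fin N) (a : Fin 5) :
    Approves P 2 v a ↔ rnk P v a < 2 := Iff.rfl

end Aux

/-- With five candidates `A < B < C < D < E` (indices `0,...,4`) and
Bloc voting with `k = 2`, if the winning set is `{B, D}` then fewer than `N/2`
voters prefer `C` to both `B` and `D`. -/
theorem five_candidates_BD_locally_stable {N : ℕ}
    (P : Fin N → Fin 5 → Fin 5 → Prop) [∀ v a b, Decidable (P v a b)]
    (hP : StrictPrefs P) (hSP : SinglePeaked P) (hN : Odd N)
    (hW : IsWinningSet P 2 ({1, 3} : Finset (Fin 5))) :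
    2 * (univ.filter fun v => P v 2 1 ∧ P v 2 3).card < N := by
  have core : ∀ v : Fin N,
      ((Approves P 2 v 1 ↔ ¬ Approves P 2 v 3) ∧
        (P v 2 1 → P v 2 3 → Approves P 2 v 2)) := by
    intro v
    have := voter_core P v (hP v) (fun i j k => hSP v i j k)
    exact this
  -- blocScore 1 + blocScore 3 = N
  have hsum : blocScore P 2 1 + blocScore P 2 3 = N := by
    have h3 : (univ.filter fun v => Approves P 2 v 3)
        = (univ.filter fun v => ¬ Approves P 2 v 1) := by
      apply Finset.filter_congr
      intro v _
      have := (core v).1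
      constructor
      · intro h3 h1; exact (this.1 h1) h3
      · intro h1
        by_contra h3
        exact h1 (this.2 h3)
    unfold blocScore
    rw [h3]
    rw [Finset.card_filter_add_card_filter_not]
    simp
  -- count ≤ blocScore 2
  have hcount : (univ.filter fun v => P v 2 1 ∧ P v 2 3).card ≤ blocScore P 2 2 := by
    apply Finset.card_le_card
    intro v hv
    simp only [mem_filter, mem_univ, true_and] at *
    exact (core v).2 hv.1 hv.2
  -- winning conditions
  have h2notin : (2 : Fin 5) ∉ ({1, 3} : Finset (Fin 5)) := by decide
  have hB := hW.2 1 (by decide) 2 h2notin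
  have hD := hW.2 3 (by decide) 2 h2notin
  omega
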